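/- If a connected open set O ⊆ ℝ³ and a continuously differentiable vector field v : O → ℝ³ satisfy ε(v) = 0 on O, then there exist a, b ∈ ℝ³ such that v(x) = a + b × x for all x ∈ O. -/

import Mathlib

open scoped Matrix
open Set Metric

section aux
variable {O : Set (Fin 3 → ℝ)} {v : (Fin 3 → ℝ) → (Fin 3 → ℝ)}

lemma coord_diff (hO : IsOpen O) (hv : ∀ i, ContDiffOn ℝ 1 (fun y => v y i) O)
    {x : Fin 3 → ℝ} (hx : x ∈ O) (i : Fin 3) :
    DifferentiableAt ℝ (fun y => v y i) x :=
  ((hv i).differentiableOn one_ne_zero).differentiableAt (hO.mem_nhds hx)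

lemma vdiff (hO : IsOpen O) (hv : ∀ i, ContDiffOn ℝ 1 (fun y => v y i) O)
    {x : Fin 3 → ℝ} (hx : x ∈ O) : DifferentiableAt ℝ v x :=
  differentiableAt_pi.2 (coord_diff hO hv hx)

lemma fderiv_coord (hO : IsOpen O) (hv : ∀ i, ContDiffOn ℝ 1 (fun y => v y i) O)
    {x : Fin 3 → ℝ} (hx : x ∈ O) (u : Fin 3 → ℝ) (i : Fin 3) :
    fderiv ℝ v x u i = fderiv ℝ (fun y => v y i) x u := by
  rw [fderiv_pi (coord_diff hO hv hx)]; rfl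

lemma entry_antisym (hO : IsOpen O) (hv : ∀ i, ContDiffOn ℝ 1 (fun y => v y i) O)
    (hsym : ∀ x ∈ O, ∀ i j : Fin 3,
      (fderiv ℝ (fun y => v y i) x (Pi.single j 1)
        + fderiv ℝ (fun y => v y j) x (Pi.single i 1)) / 2 = 0)
    {x : Fin 3 → ℝ} (hx : x ∈ O) (i j : Fin 3) :
    fderiv ℝ v x (Pi.single j 1) i + fderiv ℝ v x (Pi.single i 1) j = 0 := by
  rw [fderiv_coord hO hv hx, fderiv_coord hO hv hx]
  have := hsym x hx i j
  linarith

lemma expand_vec (u : Fin 3 → ℝ) :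
    u = u 0 • (Pi.single 0 1 : Fin 3 → ℝ) + u 1 • (Pi.single 1 1 : Fin 3 → ℝ)
      + u 2 • (Pi.single 2 1 : Fin 3 → ℝ) := by
  funext k
  fin_cases k <;> simp [Pi.single_apply]

lemma antisym (hO : IsOpen O) (hv : ∀ i, ContDiffOn ℝ 1 (fun y => v y i) O)
    (hsym : ∀ x ∈ O, ∀ i j : Fin 3,
      (fderiv ℝ (fun y => v y i) x (Pi.single j 1)
        + fderiv ℝ (fun y => v y j) x (Pi.single i 1)) / 2 = 0)
    {x : Fin 3 → ℝ} (hx : x ∈ O) (u w : Fin 3 → ℝ) :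
    fderiv ℝ v x u ⬝ᵥ w + fderiv ℝ v x w ⬝ᵥ u = 0 := by
  have hexp : ∀ z : Fin 3 → ℝ, fderiv ℝ v x z = z 0 • fderiv ℝ v x (Pi.single 0 1) + z 1 • fderiv ℝ v x (Pi.single 1 1)
      + z 2 • fderiv ℝ v x (Pi.single 2 1) := by
    intro z
    conv_lhs => rw [expand_vec z]
    simp [map_add, map_smul]
  have h := entry_antisym hO hv hsym hx
  rw [hexp u, hexp w]
  simp only [dotProduct, Fin.sum_univ_three, Pi.add_apply, Pi.smul_apply, smul_eq_mul]
  have h00 := h 0 0; have h01 := h 0 1; have h02 := h 0 2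
  have h11 := h 1 1; have h12 := h 1 2; have h22 := h 2 2
  have h10 := h 1 0; have h20 := h 2 0; have h21 := h 2 1
  linear_combination (u 0 * w 0) * h00 + (u 1 * w 0) * h01 + (u 2 * w 0) * h02
    + (u 0 * w 1) * h10 + (u 1 * w 1) * h11 + (u 2 * w 1) * h12
    + (u 0 * w 2) * h20 + (u 1 * w 2) * h21 + (u 2 * w 2) * h22

end aux

section step
variable {O : Set (Fin 3 → ℝ)} {v : (Fin 3 → ℝ) → (Fin 3 → ℝ)}
variable (hO : IsOpen O) (hv : ∀ i, ContDiffOn ℝ 1 (fun y => v y i) O)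
variable (hsym : ∀ x ∈ O, ∀ i j : Fin 3,
      (fderiv ℝ (fun y => v y i) x (Pi.single j 1)
        + fderiv ℝ (fun y => v y j) x (Pi.single i 1)) / 2 = 0)

include hO hv hsym in
lemma stepA {x₀ : Fin 3 → ℝ} {r : ℝ} (hball : ball x₀ r ⊆ O)
    {x y : Fin 3 → ℝ} (hx : x ∈ ball x₀ r) (hy : y ∈ ball x₀ r) :
    (v y) ⬝ᵥ (y - x) = (v x) ⬝ᵥ (y - x) := by
  set c := y - x with hc
  set p : ℝ → (Fin 3 → ℝ) := fun t => x + t • c with hp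
  have hpmem : ∀ t ∈ Icc (0:ℝ) 1, p t ∈ ball x₀ r := fun t ht =>
    (convex_ball x₀ r).add_smul_sub_mem hx hy ht
  have hderiv : ∀ t ∈ Icc (0:ℝ) 1, HasDerivAt (fun t => (v (p t)) ⬝ᵥ c) 0 t := by
    intro t ht
    have hpt : p t ∈ O := hball (hpmem t ht)
    have hpd : HasDerivAt p c t := by
      have : HasDerivAt (fun t : ℝ => t • c) c t := by
        simpa using (hasDerivAt_id t).smul_const c
      exact this.const_add x
    have hvd : HasFDerivAt v (fderiv ℝ v (p t)) (p t) := (vdiff hO hv hpt).hasFDerivAt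
    have hcomp : HasDerivAt (fun t => v (p t)) (fderiv ℝ v (p t) c) t :=
      hvd.comp_hasDerivAt t hpd
    have : HasDerivAt (fun t => (v (p t)) ⬝ᵥ c) ((fderiv ℝ v (p t) c) ⬝ᵥ c) t := by
      simp only [dotProduct, Fin.sum_univ_three]
      have hco := fun i => hasDerivAt_pi.1 hcomp i
      exact (((hco 0).mul_const (c 0)).add ((hco 1).mul_const (c 1))).add
        ((hco 2).mul_const (c 2))
    have hz : (fderiv ℝ v (p t) c) ⬝ᵥ c = 0 := by
      have := antisym hO hv hsym hpt c c
      linarith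
    rwa [hz] at this
  have hcont : ContinuousOn (fun t => (v (p t)) ⬝ᵥ c) (Icc (0:ℝ) 1) :=
    fun t ht => ((hderiv t ht).continuousAt).continuousWithinAt
  have := constant_of_has_deriv_right_zero hcont
    (fun t ht => ((hderiv t (Ico_subset_Icc_self ht)).hasDerivWithinAt)) 1 (by norm_num)
  have h1 : p 1 = y := by simp [hp, hc]
  have h0 : p 0 = x := by simp [hp]
  rw [h1, h0] at this
  exact this

include hO hv hsym in
lemma stepB {x₀ : Fin 3 → ℝ} {r : ℝ} (hr : 0 < r) (hball : ball x₀ r ⊆ O)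
    {y : Fin 3 → ℝ} (hy : y ∈ ball x₀ r) :
    v y = v x₀ + fderiv ℝ v x₀ (y - x₀) := by
  have hx₀b : x₀ ∈ ball x₀ r := mem_ball_self hr
  have hx₀ : x₀ ∈ O := hball hx₀b
  have key : ∀ h : Fin 3 → ℝ,
      (fderiv ℝ v x₀ h) ⬝ᵥ (y - x₀) - (v x₀) ⬝ᵥ h = -((v y) ⬝ᵥ h) := by
    intro h
    set p : ℝ → (Fin 3 → ℝ) := fun t => x₀ + t • h with hp
    have hpc : Continuous p := by
      apply continuous_const.add
      exact (continuous_id.smul continuous_const)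
    have hp0 : p 0 = x₀ := by simp [hp]
    have hev : ∀ᶠ t in nhds (0:ℝ), p t ∈ ball x₀ r := by
      have : p 0 ∈ ball x₀ r := by rw [hp0]; exact hx₀b
      exact hpc.continuousAt.eventually_mem (isOpen_ball.mem_nhds this)
    have heq : (fun t => (v (p t)) ⬝ᵥ (y - p t)) =ᶠ[nhds (0:ℝ)]
        (fun t => (v y) ⬝ᵥ (y - p t)) :=
      hev.mono (fun t ht => (stepA hO hv hsym hball ht hy).symm)
    -- derivative of LHS
    have hpd : HasDerivAt p h 0 := by
      have : HasDerivAt (fun t : ℝ => t • h) h 0 := by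
        simpa using (hasDerivAt_id (0:ℝ)).smul_const h
      simpa [hp] using this.const_add x₀
    have hvd : HasFDerivAt v (fderiv ℝ v x₀) (p 0) := by
      rw [hp0]; exact (vdiff hO hv hx₀).hasFDerivAt
    have hcomp : HasDerivAt (fun t => v (p t)) (fderiv ℝ v x₀ h) 0 :=
      hvd.comp_hasDerivAt 0 hpd
    have hco := fun i => hasDerivAt_pi.1 hcomp i
    have hlin : ∀ i : Fin 3, HasDerivAt (fun t => y i - p t i) (-h i) 0 := by
      intro i
      have : HasDerivAt (fun t : ℝ => p t i) (h i) 0 := hasDerivAt_pi.1 hpd i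
      simpa using this.const_sub (y i)
    have hL : HasDerivAt (fun t => (v (p t)) ⬝ᵥ (y - p t))
        ((fderiv ℝ v x₀ h) ⬝ᵥ (y - x₀) - (v x₀) ⬝ᵥ h) 0 := by
      have hmul : ∀ i : Fin 3, HasDerivAt (fun t => v (p t) i * (y i - p t i))
          (fderiv ℝ v x₀ h i * (y i - x₀ i) + v x₀ i * (-h i)) 0 := by
        intro i
        have := (hco i).mul (hlin i)
        simp only [hp0] at this
        exact this
      have := ((hmul 0).add (hmul 1)).add (hmul 2)
      have hgoal : ((fun t => v (p t) 0 * (y 0 - p t 0)) + (fun t => v (p t) 1 * (y 1 - p t 1))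
          + fun t => v (p t) 2 * (y 2 - p t 2)) = fun t => (v (p t)) ⬝ᵥ (y - p t) := by
        funext t
        simp [dotProduct, Fin.sum_univ_three]
      rw [hgoal] at this
      refine this.congr_deriv ?_
      simp [dotProduct, Fin.sum_univ_three]
      ring
    have hR : HasDerivAt (fun t => (v y) ⬝ᵥ (y - p t)) (-((v y) ⬝ᵥ h)) 0 := by
      have hmul : ∀ i : Fin 3, HasDerivAt (fun t => v y i * (y i - p t i))
          (v y i * (-h i)) 0 := by
        intro i
        have := (hasDerivAt_const (0:ℝ) (v y i)).mul (hlin i)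
        simp only [zero_mul, zero_add] at this
        exact this
      have := ((hmul 0).add (hmul 1)).add (hmul 2)
      have hgoal : ((fun t => v y 0 * (y 0 - p t 0)) + (fun t => v y 1 * (y 1 - p t 1))
          + fun t => v y 2 * (y 2 - p t 2)) = fun t => (v y) ⬝ᵥ (y - p t) := by
        funext t
        simp [dotProduct, Fin.sum_univ_three]
      rw [hgoal] at this
      refine this.congr_deriv ?_
      simp [dotProduct, Fin.sum_univ_three]
      ring
    exact ((hR.congr_of_eventuallyEq heq).unique hL).symm
  funext i
  have hk := key (Pi.single i 1)
  have ha := antisym hO hv hsym hx₀ (Pi.single i 1) (y - x₀)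
  simp only [dotProduct_single, mul_one] at hk ha ⊢
  have : -(fderiv ℝ v x₀ (y - x₀) i) - v x₀ i = -(v y i) := by
    rw [← hk]; ring_nf
    linarith
  simp only [Pi.add_apply]
  linarith

include hO hv hsym in
lemma local_rigid {x₀ : Fin 3 → ℝ} {r : ℝ} (hr : 0 < r) (hball : ball x₀ r ⊆ O) :
    ∃ a b : Fin 3 → ℝ, ∀ y ∈ ball x₀ r, v y = a + b ⨯₃ y := by
  have hx₀ : x₀ ∈ O := hball (mem_ball_self hr)
  have h := entry_antisym hO hv hsym hx₀
  set A := fderiv ℝ v x₀ with hA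
  set b : Fin 3 → ℝ := ![A (Pi.single 1 1) 2, A (Pi.single 2 1) 0, A (Pi.single 0 1) 1]
    with hb
  have hb0 : b 0 = A (Pi.single 1 1) 2 := rfl
  have hb1 : b 1 = A (Pi.single 2 1) 0 := rfl
  have hb2 : b 2 = A (Pi.single 0 1) 1 := rfl
  have h00 := h 0 0; have h01 := h 0 1; have h02 := h 0 2
  have h11 := h 1 1; have h12 := h 1 2; have h22 := h 2 2
  have hAh : ∀ u : Fin 3 → ℝ, A u = b ⨯₃ u := by
    intro u
    have hexp : A u = u 0 • A (Pi.single 0 1) + u 1 • A (Pi.single 1 1)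
        + u 2 • A (Pi.single 2 1) := by
      conv_lhs => rw [expand_vec u]
      simp [map_add, map_smul]
    have hcross : b ⨯₃ u = ![b 1 * u 2 - b 2 * u 1, b 2 * u 0 - b 0 * u 2,
        b 0 * u 1 - b 1 * u 0] := rfl
    funext i
    rw [hexp, hcross]
    match i with
    | 0 =>
      simp only [Pi.add_apply, Pi.smul_apply, smul_eq_mul, Matrix.cons_val_zero, hb0, hb1, hb2]
      linear_combination (u 0 / 2) * h00 + (u 1) * h01
    | 1 =>
      simp only [Pi.add_apply, Pi.smul_apply, smul_eq_mul, Matrix.cons_val_one,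
        Matrix.head_cons, Matrix.cons_val_zero, hb0, hb1, hb2]
      linear_combination (u 1 / 2) * h11 + (u 2) * h12
    | 2 =>
      simp only [Pi.add_apply, Pi.smul_apply, smul_eq_mul, Matrix.cons_val_two,
        Matrix.tail_cons, Matrix.head_cons, hb0, hb1, hb2]
      linear_combination (u 0) * h02 + (u 2 / 2) * h22
  refine ⟨v x₀ - b ⨯₃ x₀, b, fun y hy => ?_⟩
  have := stepB hO hv hsym hr hball hy
  rw [this, ← hA, hAh (y - x₀), map_sub (crossProduct b)]
  funext i
  simp only [Pi.add_apply, Pi.sub_apply]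
  ring

include hO hv hsym in
theorem main (hconn : IsConnected O) :
    ∃ a b : Fin 3 → ℝ, ∀ x ∈ O, v x = a + b ⨯₃ x := by
  obtain ⟨x₀, hx₀⟩ := hconn.nonempty
  obtain ⟨r₀, hr₀, hball₀⟩ := Metric.isOpen_iff.1 hO x₀ hx₀
  obtain ⟨a, b, hab⟩ := local_rigid hO hv hsym hr₀ hball₀
  -- uniqueness of (a, b) on a nonempty open set
  have uniq : ∀ (a₁ b₁ a₂ b₂ : Fin 3 → ℝ) (z : Fin 3 → ℝ) (ρ : ℝ), 0 < ρ →
      (∀ y ∈ ball z ρ, a₁ + b₁ ⨯₃ y = a₂ + b₂ ⨯₃ y) → a₁ = a₂ ∧ b₁ = b₂ := by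
    intro a₁ b₁ a₂ b₂ z ρ hρ heq
    have hz := heq z (mem_ball_self hρ)
    have hd : ∀ j : Fin 3, b₁ ⨯₃ (Pi.single j 1) = b₂ ⨯₃ (Pi.single j 1) := by
      intro j
      have hmem : z + (ρ/2) • (Pi.single j 1 : Fin 3 → ℝ) ∈ ball z ρ := by
        have hns : ‖(Pi.single j 1 : Fin 3 → ℝ)‖ = 1 := by
          simp [Pi.norm_single]
        rw [mem_ball_iff_norm, add_sub_cancel_left, norm_smul, hns, mul_one,
          Real.norm_eq_abs, abs_of_pos (by linarith : (0:ℝ) < ρ/2)]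
        linarith
      have h2 := heq _ hmem
      rw [map_add (crossProduct b₁), map_add (crossProduct b₂),
        map_smul (crossProduct b₁), map_smul (crossProduct b₂)] at h2
      have h3 : (ρ/2) • (b₁ ⨯₃ Pi.single j 1) = (ρ/2) • (b₂ ⨯₃ Pi.single j 1) := by
        funext i
        have e1 := congrFun h2 i
        have e2 := congrFun hz i
        simp only [Pi.add_apply, Pi.smul_apply, smul_eq_mul] at e1 e2 ⊢
        linarith
      exact smul_right_injective _ (by positivity) h3
    have hbb : b₁ = b₂ := by
      have h0 := hd 0; have h1 := hd 1
      funext i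
      have e01 := congrFun h0 1; have e02 := congrFun h0 2
      have e10 := congrFun h1 0; have e12 := congrFun h1 2
      simp [crossProduct, Pi.single_apply] at e01 e02 e10 e12
      fin_cases i <;> simp_all
    refine ⟨?_, hbb⟩
    rw [hbb] at hz
    exact add_right_cancel hz
  set S : Set (Fin 3 → ℝ) := {x | ∀ᶠ y in nhds x, v y = a + b ⨯₃ y} with hS
  have hSopen : IsOpen S := isOpen_setOf_eventually_nhds
  have hOS : O ⊆ S := by
    apply hconn.isPreconnected.subset_of_closure_inter_subset hSopen
    · exact ⟨x₀, hx₀, Filter.eventually_of_mem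
        (isOpen_ball.mem_nhds (mem_ball_self hr₀)) hab⟩
    · rintro x ⟨hxcl, hxO⟩
      obtain ⟨r, hr, hball⟩ := Metric.isOpen_iff.1 hO x hxO
      obtain ⟨a', b', hab'⟩ := local_rigid hO hv hsym hr hball
      obtain ⟨w, hwb, hwS⟩ := mem_closure_iff.1 hxcl (ball x r) isOpen_ball
        (mem_ball_self hr)
      have hw : ∀ᶠ y in nhds w, v y = a + b ⨯₃ y := hwS
      obtain ⟨U, hU, hUopen, hwU⟩ := _root_.eventually_nhds_iff.1 hw
      obtain ⟨ρ₁, hρ₁, hb₁⟩ := Metric.isOpen_iff.1 (hUopen.inter isOpen_ball) w ⟨hwU, hwb⟩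
      have heq2 : ∀ y ∈ ball w ρ₁, a + b ⨯₃ y = a' + b' ⨯₃ y := by
        intro y hy
        rw [← hU y (hb₁ hy).1]
        exact hab' y (hb₁ hy).2
      obtain ⟨haa, hbb⟩ := uniq a b a' b' w ρ₁ hρ₁ heq2
      show ∀ᶠ y in nhds x, v y = a + b ⨯₃ y
      apply Filter.eventually_of_mem (isOpen_ball.mem_nhds (mem_ball_self hr))
      intro y hy
      rw [haa, hbb]
      exact hab' y hy
  exact ⟨a, b, fun x hx => ((hOS hx).self_of_nhds)⟩

end step

/-- If a connected open set `O ⊆ ℝ³` and a `C¹` vector field `v : O → ℝ³` satisfy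
`ε(v) = 0` on `O`, then `v` is a rigid motion: `v x = a + b ⨯₃ x` on `O`. -/
theorem symGrad_zero_imp_rigid_motion (O : Set (Fin 3 → ℝ))
    (hO : IsOpen O) (hconn : IsConnected O)
    (v : (Fin 3 → ℝ) → (Fin 3 → ℝ))
    (hv : ∀ i, ContDiffOn ℝ 1 (fun y => v y i) O)
    (hsym : ∀ x ∈ O, ∀ i j : Fin 3,
      (fderiv ℝ (fun y => v y i) x (Pi.single j 1)
        + fderiv ℝ (fun y => v y j) x (Pi.single i 1)) / 2 = 0) :
    ∃ a b : Fin 3 → ℝ, ∀ x ∈ O, v x = a + b ⨯₃ x := by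
  exact main hO hv hsym hconn
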